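/- Let V₁,…,V_m be real n×n symmetric positive definite matrices and y ∈ ℝⁿ with y ≠ 0. For σ² with nonnegative entries, σ² ≠ 0, let Ω(σ²) = Σᵢ σᵢ² Vᵢ, and define the MM map M by (M(σ²))ᵢ = σᵢ²·√( (yᵀΩ(σ²)⁻¹VᵢΩ(σ²)⁻¹y) / tr(Ω(σ²)⁻¹Vᵢ) ), with (M(σ²))ᵢ = 0 when σᵢ² = 0. Let σ²⁽⁰⁾ have all entries strictly positive and define σ²⁽ᵗ⁺¹⁾ = M(σ²⁽ᵗ⁾). Then the distance between successive iterates converges to zero: ‖σ²⁽ᵗ⁺¹⁾ − σ²⁽ᵗ⁾‖₂ → 0 as t → ∞. -/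

import Mathlib

open Matrix

/-- The covariance matrix `Ω(σ²) = ∑ i, σᵢ² Vᵢ`. -/
noncomputable def covMat {m n : ℕ} (V : Fin m → Matrix (Fin n) (Fin n) ℝ)
    (s : Fin m → ℝ) : Matrix (Fin n) (Fin n) ℝ :=
  ∑ i, s i • V i

/-- The MM map `(M(σ²))ᵢ = σᵢ² √( (yᵀΩ⁻¹VᵢΩ⁻¹y) / tr(Ω⁻¹Vᵢ) )` (which is `0` whenever
`σᵢ² = 0`). -/
noncomputable def mmMap {m n : ℕ} (V : Fin m → Matrix (Fin n) (Fin n) ℝ)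
    (y : Fin n → ℝ) (s : Fin m → ℝ) : Fin m → ℝ := fun i =>
  s i * Real.sqrt ((y ⬝ᵥ ((covMat V s)⁻¹ * V i * (covMat V s)⁻¹) *ᵥ y) /
    ((covMat V s)⁻¹ * V i).trace)

set_option linter.unusedSectionVars false
set_option linter.unusedVariables false
set_option maxHeartbeats 1000000

section aux
variable {m n : ℕ}

lemma herm_bilin_comm (A : Matrix (Fin n) (Fin n) ℝ) (hA : A.IsHermitian)
    (x z : Fin n → ℝ) : x ⬝ᵥ A *ᵥ z = z ⬝ᵥ A *ᵥ x := by
  have hsym : ∀ j k, A j k = A k j := fun j k => by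
    have := congrFun (congrFun hA j) k
    simpa [Matrix.conjTranspose_apply] using this.symm
  simp only [dotProduct, Matrix.mulVec, dotProduct, Finset.mul_sum]
  rw [Finset.sum_comm]
  refine Finset.sum_congr rfl fun k _ => Finset.sum_congr rfl fun j _ => ?_
  rw [hsym j k]; ring

lemma covMat_mulVec (V : Fin m → Matrix (Fin n) (Fin n) ℝ) (s : Fin m → ℝ) (x : Fin n → ℝ) :
    covMat V s *ᵥ x = ∑ i, s i • (V i *ᵥ x) := by
  funext k
  simp only [covMat, Matrix.mulVec, dotProduct, Finset.sum_apply, Matrix.sum_apply,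
    Pi.smul_apply, Matrix.smul_apply, smul_eq_mul, Finset.sum_mul, Finset.mul_sum]
  rw [Finset.sum_comm]
  exact Finset.sum_congr rfl fun i _ => Finset.sum_congr rfl fun j _ => by ring

lemma covMat_quad (V : Fin m → Matrix (Fin n) (Fin n) ℝ) (s : Fin m → ℝ) (x z : Fin n → ℝ) :
    x ⬝ᵥ covMat V s *ᵥ z = ∑ i, s i * (x ⬝ᵥ V i *ᵥ z) := by
  rw [covMat_mulVec]
  simp only [dotProduct, Finset.sum_apply, Pi.smul_apply, smul_eq_mul,
    Finset.mul_sum]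
  rw [Finset.sum_comm]
  exact Finset.sum_congr rfl fun i _ => Finset.sum_congr rfl fun j _ => by ring

lemma covMat_isHermitian (V : Fin m → Matrix (Fin n) (Fin n) ℝ) (s : Fin m → ℝ)
    (hV : ∀ i, (V i).IsHermitian) : (covMat V s).IsHermitian := by
  unfold covMat Matrix.IsHermitian
  rw [Matrix.conjTranspose_sum]
  exact Finset.sum_congr rfl fun i _ => by
    rw [Matrix.conjTranspose_smul, (hV i).eq]; simp

lemma covMat_posDef [NeZero m] (V : Fin m → Matrix (Fin n) (Fin n) ℝ) (s : Fin m → ℝ)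
    (hV : ∀ i, (V i).PosDef) (hs : ∀ i, 0 < s i) :
    (covMat V s).PosDef := by
  refine Matrix.PosDef.of_dotProduct_mulVec_pos (covMat_isHermitian V s fun i => (hV i).isHermitian) fun x hx => ?_
  have h := covMat_quad V s x x
  simp only [star_trivial]
  rw [h]
  exact Finset.sum_pos (fun i _ => mul_pos (hs i) (by simpa using (hV i).dotProduct_mulVec_pos hx))
    Finset.univ_nonempty

open scoped MatrixOrder in
lemma psd_sqrt_exists {n : ℕ} {Q : Matrix (Fin n) (Fin n) ℝ} (hQ : Q.PosSemidef) :
    ∃ C : Matrix (Fin n) (Fin n) ℝ, C.PosSemidef ∧ C * C = Q :=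
  ⟨CFC.sqrt Q, Matrix.nonneg_iff_posSemidef.mp (CFC.sqrt_nonneg Q),
    CFC.sqrt_mul_sqrt_self Q (Matrix.nonneg_iff_posSemidef.mpr hQ)⟩

section more
variable {n : ℕ} {A B P Q : Matrix (Fin n) (Fin n) ℝ}
lemma diag_entry_eq_quad (M : Matrix (Fin n) (Fin n) ℝ) (j : Fin n) :
    M j j = (Pi.single j 1 : Fin n → ℝ) ⬝ᵥ M *ᵥ (Pi.single j 1) := by
  simp [Matrix.mulVec_single, single_dotProduct]

lemma trace_pos_of_posDef [NeZero n] (hA : A.PosDef) : 0 < A.trace := by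
  rw [Matrix.trace]
  refine Finset.sum_pos (fun j _ => ?_) Finset.univ_nonempty
  rw [Matrix.diag_apply, diag_entry_eq_quad A j]
  simpa using hA.dotProduct_mulVec_pos (x := Pi.single j 1) (by
    intro h
    have := congrFun h j
    simp at this)

lemma trace_nonneg_of_posSemidef (hA : A.PosSemidef) : 0 ≤ A.trace := by
  rw [Matrix.trace]
  refine Finset.sum_nonneg fun j _ => ?_
  rw [Matrix.diag_apply, diag_entry_eq_quad A j]
  simpa using hA.dotProduct_mulVec_nonneg (Pi.single j 1)

lemma trace_mul_nonneg_of_posSemidef (hP : P.PosSemidef) (hQ : Q.PosSemidef) :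
    0 ≤ (P * Q).trace := by
  obtain ⟨C, hCsd, hCC⟩ : ∃ C : Matrix (Fin n) (Fin n) ℝ, C.PosSemidef ∧ C * C = Q :=
    psd_sqrt_exists hQ
  have h1 : (P * Q).trace = (C * P * C).trace := by
    rw [← hCC, show P * (C * C) = P * C * C from by rw [mul_assoc],
      Matrix.trace_mul_cycle]
  rw [h1]
  refine trace_nonneg_of_posSemidef ?_
  have := hP.conjTranspose_mul_mul_same C
  rwa [hCsd.isHermitian.eq] at this

lemma trace_mul_pos_of_posDef [NeZero n] (hP : P.PosDef) (hQ : Q.PosDef) :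
    0 < (P * Q).trace := by
  obtain ⟨C, hCsd, hCC⟩ : ∃ C : Matrix (Fin n) (Fin n) ℝ, C.PosSemidef ∧ C * C = Q :=
    psd_sqrt_exists hQ.posSemidef
  have h1 : (P * Q).trace = (C * P * C).trace := by
    rw [← hCC, show P * (C * C) = P * C * C from by rw [mul_assoc],
      Matrix.trace_mul_cycle]
  rw [h1]
  refine trace_pos_of_posDef (Matrix.PosDef.of_dotProduct_mulVec_pos ?_ fun x hx => ?_)
  · have := hP.posSemidef.conjTranspose_mul_mul_same C
    rw [hCsd.isHermitian.eq] at this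
    exact this.1
  · have hCx : C *ᵥ x ≠ 0 := by
      intro h
      have hQx : Q *ᵥ x = 0 := by rw [← hCC, ← Matrix.mulVec_mulVec, h, Matrix.mulVec_zero]
      have := hP  -- dummy
      have h2 := hQ.dotProduct_mulVec_pos hx
      rw [hQx] at h2
      simp at h2
    have key : x ⬝ᵥ (C * P * C) *ᵥ x = (C *ᵥ x) ⬝ᵥ P *ᵥ (C *ᵥ x) := by
      rw [mul_assoc, ← Matrix.mulVec_mulVec,
        herm_bilin_comm C hCsd.isHermitian x ((P * C) *ᵥ x),
        dotProduct_comm, ← Matrix.mulVec_mulVec]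
    simpa [key] using hP.dotProduct_mulVec_pos hCx



/-- Cauchy–Schwarz for the pair `A`, `A⁻¹` : `(x⬝x)² ≤ (xᵀAx)(xᵀA⁻¹x)`. -/
lemma cs_inv (hA : A.PosDef) (x : Fin n → ℝ) :
    (x ⬝ᵥ x) ^ 2 ≤ (x ⬝ᵥ A *ᵥ x) * (x ⬝ᵥ A⁻¹ *ᵥ x) := by
  set w := A⁻¹ *ᵥ x with hw
  have hAw : A *ᵥ w = x := by
    rw [hw, Matrix.mulVec_mulVec, Matrix.mul_nonsing_inv _ hA.det_pos.ne'.isUnit,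
      Matrix.one_mulVec]
  have key : ∀ t : ℝ, 0 ≤ (x ⬝ᵥ A⁻¹ *ᵥ x) * (t * t) + (2 * (x ⬝ᵥ x)) * t + (x ⬝ᵥ A *ᵥ x) := by
    intro t
    have h0 := hA.posSemidef.dotProduct_mulVec_nonneg (x + t • w)
    simp only [star_trivial] at h0
    have hexp : (x + t • w) ⬝ᵥ A *ᵥ (x + t • w)
        = (x ⬝ᵥ A⁻¹ *ᵥ x) * (t * t) + (2 * (x ⬝ᵥ x)) * t + (x ⬝ᵥ A *ᵥ x) := by
      rw [Matrix.mulVec_add, Matrix.mulVec_smul, hAw]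
      rw [dotProduct_add, add_dotProduct, add_dotProduct]
      rw [dotProduct_smul, smul_dotProduct, smul_dotProduct, dotProduct_smul]
      have h1 : w ⬝ᵥ A *ᵥ x = x ⬝ᵥ x := by
        rw [herm_bilin_comm A hA.isHermitian w x, hAw]
      have h2 : w ⬝ᵥ x = x ⬝ᵥ A⁻¹ *ᵥ x := by rw [dotProduct_comm]
      simp only [smul_eq_mul, h1, h2]
      ring
    rw [hexp] at h0
    exact h0
  have hd := discrim_le_zero key
  simp only [discrim] at hd
  nlinarith [hd]

/-- entrywise bound for a quadratic form -/
lemma quad_le_entrysum (B : Matrix (Fin n) (Fin n) ℝ) (x : Fin n → ℝ) :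
    x ⬝ᵥ B *ᵥ x ≤ (∑ j, ∑ k, |B j k|) * (x ⬝ᵥ x) := by
  have hxj : ∀ j, x j ^ 2 ≤ x ⬝ᵥ x := fun j => by
    have : x ⬝ᵥ x = ∑ i, x i * x i := rfl
    rw [this]
    have h4 := Finset.single_le_sum (f := fun i => x i * x i)
      (fun i _ => mul_self_nonneg (x i)) (Finset.mem_univ j)
    nlinarith [h4]
  have step : ∀ j k, x j * B j k * x k ≤ |B j k| * (x ⬝ᵥ x) := by
    intro j k
    have h1 : x j * B j k * x k ≤ |B j k| * |x j * x k| := by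
      calc x j * B j k * x k ≤ |x j * B j k * x k| := le_abs_self _
      _ = |B j k| * |x j * x k| := by
          rw [show x j * B j k * x k = B j k * (x j * x k) from by ring, abs_mul]
    have h2 : |x j * x k| ≤ x ⬝ᵥ x := by
      have := hxj j; have := hxj k
      have habs : |x j * x k| ≤ (x j ^ 2 + x k ^ 2) / 2 := by
        rw [abs_mul]
        nlinarith [abs_nonneg (x j), abs_nonneg (x k), sq_abs (x j), sq_abs (x k),
          sq_nonneg (|x j| - |x k|)]
      nlinarith
    calc x j * B j k * x k ≤ |B j k| * |x j * x k| := h1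
    _ ≤ |B j k| * (x ⬝ᵥ x) := by
        exact mul_le_mul_of_nonneg_left h2 (abs_nonneg _)
  calc x ⬝ᵥ B *ᵥ x = ∑ j, ∑ k, x j * B j k * x k := by
        simp only [dotProduct, Matrix.mulVec, Finset.mul_sum]
        exact Finset.sum_congr rfl fun j _ => Finset.sum_congr rfl fun k _ => by ring
  _ ≤ ∑ j, ∑ k, |B j k| * (x ⬝ᵥ x) :=
      Finset.sum_le_sum fun j _ => Finset.sum_le_sum fun k _ => step j k
  _ = (∑ j, ∑ k, |B j k|) * (x ⬝ᵥ x) := by rw [Finset.sum_mul]; simp [Finset.sum_mul]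


variable {n : ℕ} {A : Matrix (Fin n) (Fin n) ℝ}

lemma eig_dot_self (hA : A.IsHermitian) (j : Fin n) :
    ((⇑(hA.eigenvectorBasis j) : Fin n → ℝ) ⬝ᵥ ⇑(hA.eigenvectorBasis j)) = 1 := by
  have hnorm := hA.eigenvectorBasis.orthonormal.1 j
  have h3 : (inner ℝ (hA.eigenvectorBasis j) (hA.eigenvectorBasis j) : ℝ) = 1 := by
    rw [real_inner_self_eq_norm_sq, hnorm]; norm_num
  rw [← h3, PiLp.inner_apply]
  simp [dotProduct, sq]

lemma eig_quad (hA : A.IsHermitian) (j : Fin n) :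
    (⇑(hA.eigenvectorBasis j) : Fin n → ℝ) ⬝ᵥ A *ᵥ ⇑(hA.eigenvectorBasis j)
      = hA.eigenvalues j := by
  rw [hA.mulVec_eigenvectorBasis]
  have h1 : (⇑(hA.eigenvectorBasis j) : Fin n → ℝ) ⬝ᵥ
      (hA.eigenvalues j • ⇑(hA.eigenvectorBasis j)) =
      hA.eigenvalues j * ((⇑(hA.eigenvectorBasis j) : Fin n → ℝ) ⬝ᵥ ⇑(hA.eigenvectorBasis j)) := by
    simp [dotProduct, Finset.mul_sum]; exact Finset.sum_congr rfl fun k _ => by ring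
  rw [h1, eig_dot_self hA j, mul_one]

lemma eig_vec_ne (hA : A.IsHermitian) (j : Fin n) :
    (⇑(hA.eigenvectorBasis j) : Fin n → ℝ) ≠ 0 := by
  intro h
  have h1 := eig_dot_self hA j
  rw [h] at h1
  simp [dotProduct] at h1

lemma det_eq_prod_eig (hA : A.IsHermitian) : A.det = ∏ j, hA.eigenvalues j := by
  simpa using hA.det_eq_prod_eigenvalues

lemma trace_eq_sum_eig (hA : A.IsHermitian) : A.trace = ∑ j, hA.eigenvalues j := by
  simpa using hA.trace_eq_sum_eigenvalues

/-- if the quadratic form dominates `c * ‖x‖²` then `det ≥ cⁿ`. -/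
lemma det_ge_of_quad (hA : A.IsHermitian) {c : ℝ} (hc : 0 ≤ c)
    (h : ∀ x : Fin n → ℝ, c * (x ⬝ᵥ x) ≤ x ⬝ᵥ A *ᵥ x) : c ^ n ≤ A.det := by
  rw [det_eq_prod_eig hA]
  calc c ^ n = ∏ _j : Fin n, c := by simp
  _ ≤ ∏ j, hA.eigenvalues j := by
      refine Finset.prod_le_prod (fun _ _ => hc) fun j _ => ?_
      have := h (⇑(hA.eigenvectorBasis j))
      rwa [eig_quad hA j, eig_dot_self hA j, mul_one] at this

/-- every eigenvalue bound from below gives PosDef-style facts; positivity of eigenvalues -/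
lemma eig_pos_of_posDef (hA : A.PosDef) (j : Fin n) : 0 < hA.isHermitian.eigenvalues j := by
  have := hA.dotProduct_mulVec_pos (eig_vec_ne hA.isHermitian j)
  simpa [eig_quad hA.isHermitian j] using this

/-- `log det C ≤ tr C - n` for positive definite `C`. -/
lemma log_det_le_trace_sub (hA : A.PosDef) :
    Real.log A.det ≤ A.trace - n := by
  rw [det_eq_prod_eig hA.isHermitian, trace_eq_sum_eig hA.isHermitian]
  rw [Real.log_prod fun j _ => (eig_pos_of_posDef hA j).ne']
  calc ∑ j, Real.log (hA.isHermitian.eigenvalues j)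
      ≤ ∑ j, (hA.isHermitian.eigenvalues j - 1) :=
        Finset.sum_le_sum fun j _ =>
          Real.log_le_sub_one_of_pos (eig_pos_of_posDef hA j)
    _ = (∑ j, hA.isHermitian.eigenvalues j) - n := by
        rw [Finset.sum_sub_distrib]; simp


lemma sqrt_conj_posDef {n : ℕ} {P Q C : Matrix (Fin n) (Fin n) ℝ}
    (hP : P.PosDef) (hQ : Q.PosDef) (hCsd : C.PosSemidef) (hCC : C * C = Q) :
    (C * P * C).PosDef := by
  refine Matrix.PosDef.of_dotProduct_mulVec_pos ?_ fun x hx => ?_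
  · have h := hP.posSemidef.conjTranspose_mul_mul_same C
    rw [hCsd.isHermitian.eq] at h
    exact h.1
  · have hCx : C *ᵥ x ≠ 0 := by
      intro h
      have hQx : Q *ᵥ x = 0 := by rw [← hCC, ← Matrix.mulVec_mulVec, h, Matrix.mulVec_zero]
      have h2 := hQ.dotProduct_mulVec_pos hx
      rw [hQx] at h2
      simp at h2
    have key : x ⬝ᵥ (C * P * C) *ᵥ x = (C *ᵥ x) ⬝ᵥ P *ᵥ (C *ᵥ x) := by
      rw [mul_assoc, ← Matrix.mulVec_mulVec,
        herm_bilin_comm C hCsd.isHermitian x ((P * C) *ᵥ x),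
        dotProduct_comm, ← Matrix.mulVec_mulVec]
    simpa [key] using hP.dotProduct_mulVec_pos hCx

lemma dot_self_nonneg {n : ℕ} (x : Fin n → ℝ) : 0 ≤ x ⬝ᵥ x :=
  Finset.sum_nonneg fun i _ => mul_self_nonneg (x i)

lemma dot_self_pos {n : ℕ} {x : Fin n → ℝ} (hx : x ≠ 0) : 0 < x ⬝ᵥ x := by
  obtain ⟨j, hj⟩ := Function.ne_iff.mp hx
  exact Finset.sum_pos' (fun i _ => mul_self_nonneg (x i))
    ⟨j, Finset.mem_univ j, mul_self_pos.mpr (by simpa using hj)⟩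

/-- if `xᵀAx ≤ M‖x‖²` then `xᵀA⁻¹x ≥ ‖x‖²/M`. -/
lemma inv_quad_lower {n : ℕ} {A : Matrix (Fin n) (Fin n) ℝ} (hA : A.PosDef) {M : ℝ}
    (hM : 0 < M) (h : ∀ x : Fin n → ℝ, x ⬝ᵥ A *ᵥ x ≤ M * (x ⬝ᵥ x)) :
    ∀ x : Fin n → ℝ, (1 / M) * (x ⬝ᵥ x) ≤ x ⬝ᵥ A⁻¹ *ᵥ x := by
  intro x
  rcases eq_or_ne x 0 with rfl | hx
  · simp
  · have ht : 0 < x ⬝ᵥ x := dot_self_pos hx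
    have hcs := cs_inv hA x
    have hAx : 0 < x ⬝ᵥ A *ᵥ x := by simpa using hA.dotProduct_mulVec_pos hx
    have hAinvx : 0 ≤ x ⬝ᵥ A⁻¹ *ᵥ x := by simpa using hA.inv.posSemidef.dotProduct_mulVec_nonneg x
    have h1 : (x ⬝ᵥ x) ^ 2 ≤ (M * (x ⬝ᵥ x)) * (x ⬝ᵥ A⁻¹ *ᵥ x) :=
      le_trans hcs (mul_le_mul_of_nonneg_right (h x) hAinvx)
    rw [div_mul_eq_mul_div, div_le_iff₀ hM]
    nlinarith [h1, ht]

/-- every positive definite matrix dominates a positive multiple of the identity form. -/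
lemma posdef_quad_lower {n : ℕ} {A : Matrix (Fin n) (Fin n) ℝ} (hA : A.PosDef) :
    ∃ c : ℝ, 0 < c ∧ ∀ x : Fin n → ℝ, c * (x ⬝ᵥ x) ≤ x ⬝ᵥ A *ᵥ x := by
  set M : ℝ := (∑ j, ∑ k, |A⁻¹ j k|) + 1 with hM
  have hMpos : 0 < M := by
    have h0 : 0 ≤ ∑ j, ∑ k, |A⁻¹ j k| :=
      Finset.sum_nonneg fun j _ => Finset.sum_nonneg fun k _ => abs_nonneg _
    rw [hM]
    linarith
  have hub : ∀ x : Fin n → ℝ, x ⬝ᵥ A⁻¹ *ᵥ x ≤ M * (x ⬝ᵥ x) := by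
    intro x
    calc x ⬝ᵥ A⁻¹ *ᵥ x ≤ (∑ j, ∑ k, |A⁻¹ j k|) * (x ⬝ᵥ x) := quad_le_entrysum _ x
    _ ≤ M * (x ⬝ᵥ x) := by
        apply mul_le_mul_of_nonneg_right _ (dot_self_nonneg x)
        simp [hM]
  have := inv_quad_lower hA.inv hMpos hub
  rw [Matrix.nonsing_inv_nonsing_inv _ hA.det_pos.ne'.isUnit] at this
  exact ⟨1 / M, by positivity, this⟩

/-- trace comparison: if `xᵀPx ≥ c‖x‖²` and `Q ⪰ 0` then `tr(PQ) ≥ c tr(Q)`. -/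
lemma trace_mul_ge {n : ℕ} {P Q : Matrix (Fin n) (Fin n) ℝ} (hPh : P.IsHermitian)
    (hQ : Q.PosSemidef) {c : ℝ} (h : ∀ x : Fin n → ℝ, c * (x ⬝ᵥ x) ≤ x ⬝ᵥ P *ᵥ x) :
    c * Q.trace ≤ (P * Q).trace := by
  have hpsd : (P - c • (1 : Matrix (Fin n) (Fin n) ℝ)).PosSemidef := by
    refine Matrix.PosSemidef.of_dotProduct_mulVec_nonneg ?_ ?_
    · unfold Matrix.IsHermitian
      rw [Matrix.conjTranspose_sub, hPh.eq, Matrix.conjTranspose_smul]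
      congr 1
      simp
    · intro x
      have hq : x ⬝ᵥ (P - c • (1 : Matrix (Fin n) (Fin n) ℝ)) *ᵥ x
          = x ⬝ᵥ P *ᵥ x - c * (x ⬝ᵥ x) := by
        rw [Matrix.sub_mulVec, dotProduct_sub]
        congr 1
        rw [Matrix.smul_mulVec, Matrix.one_mulVec, dotProduct_smul]
        rfl
      simp only [star_trivial]
      rw [hq]
      linarith [h x]
  have h2 := trace_mul_nonneg_of_posSemidef hpsd hQ
  have h3 : (P - c • (1 : Matrix (Fin n) (Fin n) ℝ)) * Q = P * Q - c • Q := by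
    rw [Matrix.sub_mul, Matrix.smul_mul, Matrix.one_mul]
  rw [h3, Matrix.trace_sub, Matrix.trace_smul] at h2
  have : c • Q.trace = c * Q.trace := rfl
  linarith [h2, this ▸ h2]

end more

end aux

namespace MMProof
variable {m n : ℕ}

noncomputable def aQ (V : Fin m → Matrix (Fin n) (Fin n) ℝ) (y : Fin n → ℝ)
    (s : Fin m → ℝ) (i : Fin m) : ℝ :=
  y ⬝ᵥ ((covMat V s)⁻¹ * V i * (covMat V s)⁻¹) *ᵥ y

noncomputable def bT (V : Fin m → Matrix (Fin n) (Fin n) ℝ)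
    (s : Fin m → ℝ) (i : Fin m) : ℝ :=
  ((covMat V s)⁻¹ * V i).trace

noncomputable def Lfun (V : Fin m → Matrix (Fin n) (Fin n) ℝ) (y : Fin n → ℝ)
    (s : Fin m → ℝ) : ℝ :=
  - Real.log (covMat V s).det - y ⬝ᵥ (covMat V s)⁻¹ *ᵥ y

lemma mmMap_eq (V : Fin m → Matrix (Fin n) (Fin n) ℝ) (y : Fin n → ℝ) (s : Fin m → ℝ)
    (i : Fin m) : mmMap V y s i = s i * Real.sqrt (aQ V y s i / bT V s i) := rfl

variable (V : Fin m → Matrix (Fin n) (Fin n) ℝ) (y : Fin n → ℝ) (s : Fin m → ℝ)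

section pos
variable [NeZero m] [NeZero n] (hV : ∀ i, (V i).PosDef) (hy : y ≠ 0) (hs : ∀ i, 0 < s i)
include hV hs

lemma OmInv_mul (h : True) : (covMat V s)⁻¹ * covMat V s = 1 :=
  Matrix.nonsing_inv_mul _ (covMat_posDef V s hV hs).det_pos.ne'.isUnit

lemma mul_OmInv (h : True) : covMat V s * (covMat V s)⁻¹ = 1 :=
  Matrix.mul_nonsing_inv _ (covMat_posDef V s hV hs).det_pos.ne'.isUnit

include hy in
lemma z_ne : (covMat V s)⁻¹ *ᵥ y ≠ 0 := by
  intro h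
  apply hy
  have : covMat V s *ᵥ ((covMat V s)⁻¹ *ᵥ y) = y := by
    rw [Matrix.mulVec_mulVec, mul_OmInv V s hV hs trivial, Matrix.one_mulVec]
  rw [h, Matrix.mulVec_zero] at this
  exact this.symm

lemma aQ_eq (i : Fin m) :
    aQ V y s i = ((covMat V s)⁻¹ *ᵥ y) ⬝ᵥ V i *ᵥ ((covMat V s)⁻¹ *ᵥ y) := by
  unfold aQ
  rw [mul_assoc, ← Matrix.mulVec_mulVec, ← Matrix.mulVec_mulVec,
    herm_bilin_comm _ ((covMat_posDef V s hV hs).inv).isHermitian,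
    dotProduct_comm]

include hy in
lemma aQ_pos (i : Fin m) : 0 < aQ V y s i := by
  rw [aQ_eq V y s hV hs]
  simpa using (hV i).dotProduct_mulVec_pos (z_ne V y s hV hy hs)

lemma bT_pos (i : Fin m) : 0 < bT V s i :=
  trace_mul_pos_of_posDef ((covMat_posDef V s hV hs).inv) (hV i)

include hy in
lemma mmMap_pos (i : Fin m) : 0 < mmMap V y s i := by
  rw [mmMap_eq]
  exact mul_pos (hs i) (Real.sqrt_pos.mpr (div_pos (aQ_pos V y s hV hy hs i)
    (bT_pos V s hV hs i)))

/-- `yᵀ Ω⁻¹ y = ∑ sᵢ aᵢ` -/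
lemma quad_eq_sum : y ⬝ᵥ (covMat V s)⁻¹ *ᵥ y = ∑ i, s i * aQ V y s i := by
  set z := (covMat V s)⁻¹ *ᵥ y with hz
  have h1 : ∀ i, aQ V y s i = z ⬝ᵥ V i *ᵥ z := aQ_eq V y s hV hs
  have h2 : ∑ i, s i * aQ V y s i = z ⬝ᵥ covMat V s *ᵥ z := by
    rw [covMat_quad]
    exact Finset.sum_congr rfl fun i _ => by rw [h1 i]
  have h3 : covMat V s *ᵥ z = y := by
    rw [hz, Matrix.mulVec_mulVec, mul_OmInv V s hV hs trivial, Matrix.one_mulVec]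
  rw [h2, h3, dotProduct_comm]

/-- `∑ sᵢ bᵢ = n` -/
lemma sum_s_bT : ∑ i, s i * bT V s i = (n : ℝ) := by
  have h1 : ∑ i, s i * bT V s i = ((covMat V s)⁻¹ * covMat V s).trace := by
    unfold covMat
    rw [Matrix.mul_sum, Matrix.trace_sum]
    exact (Finset.sum_congr rfl fun i _ => by
      rw [Matrix.mul_smul, Matrix.trace_smul]; rfl).symm
  rw [h1, OmInv_mul V s hV hs trivial, Matrix.trace_one]
  simp

/-- trace of `Ω(s)⁻¹ * Ω(s')` -/
lemma trace_inv_mul_covMat (s' : Fin m → ℝ) :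
    ((covMat V s)⁻¹ * covMat V s').trace = ∑ i, s' i * bT V s i := by
  unfold covMat
  rw [Matrix.mul_sum, Matrix.trace_sum]
  exact Finset.sum_congr rfl fun i _ => by
    rw [Matrix.mul_smul, Matrix.trace_smul]; rfl

/-- surrogate inequality (ii): the new quadratic term is majorized. -/
lemma quad_new_le (s' : Fin m → ℝ) (hs' : ∀ i, 0 < s' i) :
    y ⬝ᵥ (covMat V s')⁻¹ *ᵥ y ≤ ∑ i, (s i) ^ 2 / s' i * aQ V y s i := by
  have hOm := covMat_posDef V s hV hs
  have hOm' := covMat_posDef V s' hV hs'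
  set z := (covMat V s)⁻¹ *ᵥ y with hzdef
  set u := (covMat V s')⁻¹ *ᵥ y with hudef
  have hOmz : covMat V s *ᵥ z = y := by
    rw [hzdef, Matrix.mulVec_mulVec, mul_OmInv V s hV hs trivial, Matrix.one_mulVec]
  have hOm'u : covMat V s' *ᵥ u = y := by
    rw [hudef, Matrix.mulVec_mulVec,
      Matrix.mul_nonsing_inv _ hOm'.det_pos.ne'.isUnit, Matrix.one_mulVec]
  have key : ∀ i, 2 * (s i * (u ⬝ᵥ V i *ᵥ z)) ≤
      s' i * (u ⬝ᵥ V i *ᵥ u) + (s i) ^ 2 / s' i * (z ⬝ᵥ V i *ᵥ z) := by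
    intro i
    have hpsd := (hV i).posSemidef.dotProduct_mulVec_nonneg (s' i • u - s i • z)
    simp only [star_trivial] at hpsd
    have hexp : (s' i • u - s i • z) ⬝ᵥ V i *ᵥ (s' i • u - s i • z)
        = s' i ^ 2 * (u ⬝ᵥ V i *ᵥ u) - 2 * s' i * s i * (u ⬝ᵥ V i *ᵥ z)
          + s i ^ 2 * (z ⬝ᵥ V i *ᵥ z) := by
      rw [Matrix.mulVec_sub, Matrix.mulVec_smul, Matrix.mulVec_smul]
      rw [sub_dotProduct, smul_dotProduct, smul_dotProduct,
        dotProduct_sub, dotProduct_sub, dotProduct_smul, dotProduct_smul,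
        dotProduct_smul, dotProduct_smul]
      rw [herm_bilin_comm (V i) (hV i).isHermitian z u]
      simp only [smul_eq_mul]
      ring
    rw [hexp] at hpsd
    have key2 : 0 ≤ s' i * (s' i * (u ⬝ᵥ V i *ᵥ u) + (s i) ^ 2 / s' i * (z ⬝ᵥ V i *ᵥ z)
        - 2 * (s i * (u ⬝ᵥ V i *ᵥ z))) := by
      have heq : s' i * (s' i * (u ⬝ᵥ V i *ᵥ u) + (s i) ^ 2 / s' i * (z ⬝ᵥ V i *ᵥ z)
          - 2 * (s i * (u ⬝ᵥ V i *ᵥ z)))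
          = s' i ^ 2 * (u ⬝ᵥ V i *ᵥ u) - 2 * s' i * s i * (u ⬝ᵥ V i *ᵥ z)
            + s i ^ 2 * (z ⬝ᵥ V i *ᵥ z) := by
        field_simp [(hs' i).ne']
        ring
      rw [heq]
      exact hpsd
    have h3 := (mul_nonneg_iff_of_pos_left (hs' i)).mp key2
    linarith
  have hsum := Finset.sum_le_sum fun i (_ : i ∈ Finset.univ) => key i
  have e1 : ∑ i, 2 * (s i * (u ⬝ᵥ V i *ᵥ z)) = 2 * (u ⬝ᵥ y) := by
    rw [← Finset.mul_sum, ← covMat_quad, hOmz]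
  have e2 : ∑ i, (s' i * (u ⬝ᵥ V i *ᵥ u) + (s i) ^ 2 / s' i * (z ⬝ᵥ V i *ᵥ z))
      = (u ⬝ᵥ y) + ∑ i, (s i) ^ 2 / s' i * (z ⬝ᵥ V i *ᵥ z) := by
    rw [Finset.sum_add_distrib, ← covMat_quad, hOm'u]
  rw [e1, e2] at hsum
  have e3 : y ⬝ᵥ (covMat V s')⁻¹ *ᵥ y = u ⬝ᵥ y := by
    rw [← hudef, dotProduct_comm]
  have e4 : ∀ i, aQ V y s i = z ⬝ᵥ V i *ᵥ z := fun i => by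
    rw [aQ_eq V y s hV hs, ← hzdef]
  rw [e3]
  calc u ⬝ᵥ y ≤ ∑ i, (s i) ^ 2 / s' i * (z ⬝ᵥ V i *ᵥ z) := by linarith
  _ = ∑ i, (s i) ^ 2 / s' i * aQ V y s i :=
      Finset.sum_congr rfl fun i _ => by rw [e4 i]

/-- surrogate inequality (i): log-det bound. -/
lemma logdet_le (s' : Fin m → ℝ) (hs' : ∀ i, 0 < s' i) :
    Real.log (covMat V s').det ≤
      Real.log (covMat V s).det + (∑ i, s' i * bT V s i) - n := by
  have hOm := covMat_posDef V s hV hs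
  have hOm' := covMat_posDef V s' hV hs'
  obtain ⟨C, hCsd, hCC⟩ : ∃ C : Matrix (Fin n) (Fin n) ℝ,
      C.PosSemidef ∧ C * C = covMat V s' :=
    psd_sqrt_exists hOm'.posSemidef
  have hCPD : (C * (covMat V s)⁻¹ * C).PosDef := sqrt_conj_posDef hOm.inv hOm' hCsd hCC
  have hlog := log_det_le_trace_sub hCPD
  have hdet : (C * (covMat V s)⁻¹ * C).det = (covMat V s').det * (covMat V s).det⁻¹ := by
    rw [Matrix.det_mul, Matrix.det_mul, Matrix.det_nonsing_inv, Ring.inverse_eq_inv']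
    rw [← hCC, Matrix.det_mul]
    ring
  have htr : (C * (covMat V s)⁻¹ * C).trace = ∑ i, s' i * bT V s i := by
    rw [Matrix.trace_mul_cycle, hCC, Matrix.trace_mul_comm]
    exact trace_inv_mul_covMat V s hV hs s'
  rw [hdet, htr] at hlog
  rw [Real.log_mul hOm'.det_pos.ne' (inv_pos.mpr hOm.det_pos).ne', Real.log_inv] at hlog
  linarith


include hy in
/-- key one-step inequality: the MM update increases `L` by at least
`∑ sᵢ(√aᵢ-√bᵢ)²`. -/
lemma one_step :
    Lfun V y s + ∑ i, s i * (Real.sqrt (aQ V y s i) - Real.sqrt (bT V s i)) ^ 2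
      ≤ Lfun V y (mmMap V y s) := by
  set s' := mmMap V y s with hs'def
  have hs' : ∀ i, 0 < s' i := mmMap_pos V y s hV hy hs
  have h1 := logdet_le V s hV hs s' hs'
  have h2 := quad_new_le V y s hV hs s' hs'
  have h3 := quad_eq_sum V y s hV hs
  have h4 := sum_s_bT V s hV hs
  -- pointwise identities
  have id12 : ∀ i, s' i * bT V s i = s i * (Real.sqrt (aQ V y s i) * Real.sqrt (bT V s i))
      ∧ (s i) ^ 2 / s' i * aQ V y s i
        = s i * (Real.sqrt (aQ V y s i) * Real.sqrt (bT V s i)) := by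
    intro i
    have ha := aQ_pos V y s hV hy hs i
    have hb := bT_pos V s hV hs i
    have hsi := hs i
    have hsq : s' i = s i * (Real.sqrt (aQ V y s i) / Real.sqrt (bT V s i)) := by
      rw [hs'def, mmMap_eq, Real.sqrt_div ha.le]
    have hsa : Real.sqrt (aQ V y s i) ^ 2 = aQ V y s i := Real.sq_sqrt ha.le
    have hsb : Real.sqrt (bT V s i) ^ 2 = bT V s i := Real.sq_sqrt hb.le
    have hpa : 0 < Real.sqrt (aQ V y s i) := Real.sqrt_pos.mpr ha
    have hpb : 0 < Real.sqrt (bT V s i) := Real.sqrt_pos.mpr hb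
    constructor
    · rw [hsq]
      field_simp
      linear_combination (-1 : ℝ) * hsb
    · rw [hsq]
      field_simp
      linear_combination (-1 : ℝ) * hsa
  have key : ∀ i, s i * (Real.sqrt (aQ V y s i) - Real.sqrt (bT V s i)) ^ 2
      = s i * aQ V y s i + s i * bT V s i - s' i * bT V s i
        - (s i) ^ 2 / s' i * aQ V y s i := by
    intro i
    have ha := aQ_pos V y s hV hy hs i
    have hb := bT_pos V s hV hs i
    have hsa : Real.sqrt (aQ V y s i) ^ 2 = aQ V y s i := Real.sq_sqrt ha.le
    have hsb : Real.sqrt (bT V s i) ^ 2 = bT V s i := Real.sq_sqrt hb.le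
    rw [(id12 i).1, (id12 i).2]
    have hexp : s i * (Real.sqrt (aQ V y s i) - Real.sqrt (bT V s i)) ^ 2
        = s i * Real.sqrt (aQ V y s i) ^ 2 + s i * Real.sqrt (bT V s i) ^ 2
          - 2 * (s i * (Real.sqrt (aQ V y s i) * Real.sqrt (bT V s i))) := by ring
    rw [hexp, hsa, hsb]
    ring
  have hsum : ∑ i, s i * (Real.sqrt (aQ V y s i) - Real.sqrt (bT V s i)) ^ 2
      = ∑ i, s i * aQ V y s i + ∑ i, s i * bT V s i - ∑ i, s' i * bT V s i
        - ∑ i, (s i) ^ 2 / s' i * aQ V y s i := by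
    rw [← Finset.sum_add_distrib, ← Finset.sum_sub_distrib, ← Finset.sum_sub_distrib]
    exact Finset.sum_congr rfl fun i _ => by rw [key i]
  -- assemble
  unfold Lfun
  rw [h3, hsum]
  have h3' := quad_eq_sum V y s hV hs
  linarith [h1, h2, h4]

end pos
end MMProof

lemma diff_sq_helper (σ x yv B : ℝ) (hy : yv ≠ 0) (hB : yv ^ 2 = B) :
    (σ * (x / yv) - σ) ^ 2 = σ / B * (σ * (x - yv) ^ 2) := by
  subst hB
  field_simp

open MMProof Filter

/-- the Euclidean distance between successive MM iterates converges
to zero. -/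
theorem mm_successive_iterates_dist_tendsto_zero (m n : ℕ)
    (V : Fin m → Matrix (Fin n) (Fin n) ℝ) (hV : ∀ i, (V i).PosDef)
    (y : Fin n → ℝ) (hy : y ≠ 0) (s : ℕ → Fin m → ℝ)
    (h0 : ∀ i, 0 < s 0 i) (hrec : ∀ t, s (t + 1) = mmMap V y (s t)) :
    Filter.Tendsto (fun t => Real.sqrt (∑ i, (s (t + 1) i - s t i) ^ 2))
      Filter.atTop (nhds 0) := by
  rcases Nat.eq_zero_or_pos m with hm | hm
  · subst hm
    simpa using (tendsto_const_nhds :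
      Tendsto (fun _ : ℕ => (0:ℝ)) atTop (nhds 0))
  obtain ⟨j0, hj0⟩ := Function.ne_iff.mp hy
  haveI : NeZero m := ⟨hm.ne'⟩
  haveI : NeZero n := ⟨fun h => by subst h; exact j0.elim0⟩
  have hnpos : (0:ℝ) < n := by
    have := Nat.pos_of_ne_zero (NeZero.ne n)
    exact_mod_cast this
  -- positivity of all iterates
  have hpos : ∀ t, ∀ i, 0 < s t i := by
    intro t
    induction t with
    | zero => exact h0
    | succ t ih => rw [hrec]; exact mmMap_pos V y (s t) hV hy ih
  -- per-matrix lower constants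
  choose c hcpos hcineq using fun i => posdef_quad_lower (hV i)
  set cmin := Finset.univ.inf' Finset.univ_nonempty c with hcmindef
  have hcmin : 0 < cmin := (Finset.lt_inf'_iff Finset.univ_nonempty).mpr fun i _ => hcpos i
  have hcminle : ∀ i, cmin ≤ c i := fun i => Finset.inf'_le _ (Finset.mem_univ i)
  -- entry sum upper constant
  set W := (∑ i, ∑ j, ∑ k, |V i j k|) + 1 with hWdef
  have hEnn : 0 ≤ ∑ i : Fin m, ∑ j, ∑ k, |V i j k| :=
    Finset.sum_nonneg fun i _ => Finset.sum_nonneg fun j _ =>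
      Finset.sum_nonneg fun k _ => abs_nonneg _
  have hW : 0 < W := by rw [hWdef]; linarith
  -- y-constants
  set T := ∑ i, y ⬝ᵥ V i *ᵥ y with hTdef
  have hTpos : 0 < T := Finset.sum_pos
    (fun i _ => by simpa using (hV i).dotProduct_mulVec_pos hy) Finset.univ_nonempty
  set c2 := (y ⬝ᵥ y) ^ 2 / T with hc2def
  have hc2 : 0 < c2 := div_pos (pow_pos (dot_self_pos hy) 2) hTpos
  set α := c2 * cmin / n with hαdef
  have hα : 0 < α := by positivity
  set K := -(n:ℝ) * Real.log α - n with hKdef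
  -- upper bound for L in terms of the sup of the coordinates
  have hLup : ∀ p : Fin m → ℝ, (∀ i, 0 < p i) →
      Lfun V y p ≤ -(n:ℝ) * Real.log ((Finset.univ.sup' Finset.univ_nonempty p) * cmin)
        - c2 / (Finset.univ.sup' Finset.univ_nonempty p) := by
    intro p hp
    set Sp := Finset.univ.sup' Finset.univ_nonempty p with hSpdef
    obtain ⟨i0, _, hi0⟩ := Finset.exists_mem_eq_sup' Finset.univ_nonempty p
    have hSpos : 0 < Sp := by rw [hSpdef, hi0]; exact hp i0
    have hΩ := covMat_posDef V p hV hp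
    have hqlow : ∀ x : Fin n → ℝ, (Sp * cmin) * (x ⬝ᵥ x) ≤ x ⬝ᵥ covMat V p *ᵥ x := by
      intro x
      rw [covMat_quad]
      have step1 : (Sp * cmin) * (x ⬝ᵥ x) ≤ Sp * (x ⬝ᵥ V i0 *ᵥ x) := by
        have h1 : cmin * (x ⬝ᵥ x) ≤ c i0 * (x ⬝ᵥ x) :=
          mul_le_mul_of_nonneg_right (hcminle i0) (dot_self_nonneg x)
        have h2 : c i0 * (x ⬝ᵥ x) ≤ x ⬝ᵥ V i0 *ᵥ x := hcineq i0 x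
        calc (Sp * cmin) * (x ⬝ᵥ x) = Sp * (cmin * (x ⬝ᵥ x)) := by ring
        _ ≤ Sp * (x ⬝ᵥ V i0 *ᵥ x) :=
            mul_le_mul_of_nonneg_left (le_trans h1 h2) hSpos.le
      have step2 : Sp * (x ⬝ᵥ V i0 *ᵥ x) = p i0 * (x ⬝ᵥ V i0 *ᵥ x) := by
        rw [hSpdef, hi0]
      have step3 : p i0 * (x ⬝ᵥ V i0 *ᵥ x) ≤ ∑ i, p i * (x ⬝ᵥ V i *ᵥ x) :=
        Finset.single_le_sum (f := fun i => p i * (x ⬝ᵥ V i *ᵥ x))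
          (fun i _ => mul_nonneg (hp i).le (by simpa using (hV i).posSemidef.dotProduct_mulVec_nonneg x))
          (Finset.mem_univ i0)
      linarith
    have hdet : (Sp * cmin) ^ n ≤ (covMat V p).det :=
      det_ge_of_quad hΩ.isHermitian (by positivity) hqlow
    have hlogdet : (n:ℝ) * Real.log (Sp * cmin) ≤ Real.log (covMat V p).det := by
      have h1 := Real.log_le_log (by positivity) hdet
      rwa [Real.log_pow] at h1
    have hyqpos : 0 < y ⬝ᵥ covMat V p *ᵥ y := by simpa using hΩ.dotProduct_mulVec_pos hy
    have hyq : y ⬝ᵥ covMat V p *ᵥ y ≤ Sp * T := by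
      rw [covMat_quad, hTdef, Finset.mul_sum]
      refine Finset.sum_le_sum fun i _ => ?_
      exact mul_le_mul_of_nonneg_right
        (Finset.le_sup' p (Finset.mem_univ i))
        (by simpa using (hV i).posSemidef.dotProduct_mulVec_nonneg y)
    have hql : c2 / Sp ≤ y ⬝ᵥ (covMat V p)⁻¹ *ᵥ y := by
      have hcs := cs_inv hΩ y
      have h5 : (y ⬝ᵥ y) ^ 2 / (y ⬝ᵥ covMat V p *ᵥ y) ≤ y ⬝ᵥ (covMat V p)⁻¹ *ᵥ y := by
        rw [div_le_iff₀ hyqpos]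
        nlinarith [hcs]
      have h6 : c2 / Sp = (y ⬝ᵥ y) ^ 2 / (Sp * T) := by
        rw [hc2def, div_div, mul_comm T Sp]
      have h7 : (y ⬝ᵥ y) ^ 2 / (Sp * T) ≤ (y ⬝ᵥ y) ^ 2 / (y ⬝ᵥ covMat V p *ᵥ y) :=
        div_le_div_of_nonneg_left (sq_nonneg _) hyqpos hyq
      linarith
    have : Lfun V y p = - Real.log (covMat V p).det - y ⬝ᵥ (covMat V p)⁻¹ *ᵥ y := rfl
    rw [this]
    linarith
  -- global upper bound K
  have hK : ∀ p : Fin m → ℝ, (∀ i, 0 < p i) → Lfun V y p ≤ K := by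
    intro p hp
    have h1 := hLup p hp
    set Sp := Finset.univ.sup' Finset.univ_nonempty p with hSpdef
    obtain ⟨i0, _, hi0⟩ := Finset.exists_mem_eq_sup' Finset.univ_nonempty p
    have hSpos : 0 < Sp := by rw [hSpdef, hi0]; exact hp i0
    have hlb : Real.log α - Real.log (Sp * cmin) ≤ α / (Sp * cmin) - 1 := by
      have h2 := Real.log_le_sub_one_of_pos (show (0:ℝ) < α / (Sp * cmin) by positivity)
      rwa [Real.log_div hα.ne' (by positivity : (Sp * cmin) ≠ 0)] at h2
    have hαc : (n:ℝ) * (α / (Sp * cmin)) = c2 / Sp := by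
      rw [hαdef]
      field_simp
    have hmul : (n:ℝ) * Real.log α - (n:ℝ) * Real.log (Sp * cmin)
        ≤ c2 / Sp - n := by
      have h3 := mul_le_mul_of_nonneg_left hlb hnpos.le
      rw [mul_sub, mul_sub, hαc, mul_one] at h3
      linarith
    rw [hKdef]
    linarith
  -- the Lyapunov sequence
  set f : ℕ → ℝ := fun t => Lfun V y (s t) with hfdef
  have hstep : ∀ t, f t + ∑ i, s t i *
      (Real.sqrt (aQ V y (s t) i) - Real.sqrt (bT V (s t) i)) ^ 2 ≤ f (t+1) := by
    intro t
    have h1 := one_step V y (s t) hV hy (hpos t)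
    rw [← hrec t] at h1
    exact h1
  have hgapnn : ∀ t, 0 ≤ ∑ i, s t i *
      (Real.sqrt (aQ V y (s t) i) - Real.sqrt (bT V (s t) i)) ^ 2 := fun t =>
    Finset.sum_nonneg fun i _ => mul_nonneg (hpos t i).le (sq_nonneg _)
  have hmono : Monotone f := monotone_nat_of_le_succ fun t => by
    have := hstep t; have := hgapnn t; linarith
  have hfK : ∀ t, f t ≤ K := fun t => hK (s t) (hpos t)
  -- uniform bound R on the iterates
  set R := Real.exp (-(f 0)/n) / cmin with hRdef
  have hRpos : 0 < R := by positivity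
  have hsR : ∀ t i, s t i ≤ R := by
    intro t i
    set Sp := Finset.univ.sup' Finset.univ_nonempty (s t) with hSpdef
    obtain ⟨i0, _, hi0⟩ := Finset.exists_mem_eq_sup' Finset.univ_nonempty (s t)
    have hSpos : 0 < Sp := by rw [hSpdef, hi0]; exact hpos t i0
    have h1 := hLup (s t) (hpos t)
    have h2 : f 0 ≤ f t := hmono (Nat.zero_le t)
    have h3 : f 0 ≤ -(n:ℝ) * Real.log (Sp * cmin) := by
      have h4 : 0 < c2 / Sp := by positivity
      calc f 0 ≤ f t := h2
      _ ≤ -(n:ℝ) * Real.log (Sp * cmin) - c2 / Sp := h1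
      _ ≤ -(n:ℝ) * Real.log (Sp * cmin) := by linarith
    have h5 : Real.log (Sp * cmin) ≤ (-(f 0))/n := by
      rw [le_div_iff₀ hnpos]
      nlinarith [h3]
    have h6 : Sp * cmin ≤ Real.exp (-(f 0)/n) := by
      have h7 := Real.exp_le_exp.mpr h5
      rwa [Real.exp_log (by positivity : (0:ℝ) < Sp * cmin)] at h7
    have h8 : Sp ≤ R := by
      rw [hRdef, le_div_iff₀ hcmin]
      linarith
    exact le_trans (Finset.le_sup' (s t) (Finset.mem_univ i)) h8
  -- uniform lower bound β for the traces b
  set β := (Finset.univ.inf' Finset.univ_nonempty (fun i => (V i).trace)) / (R * W)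
    with hβdef
  have htrVpos : ∀ i : Fin m, 0 < (V i).trace := fun i => trace_pos_of_posDef (hV i)
  have htrmin : 0 < Finset.univ.inf' Finset.univ_nonempty (fun i : Fin m => (V i).trace) :=
    (Finset.lt_inf'_iff Finset.univ_nonempty).mpr fun i _ => htrVpos i
  have hβpos : 0 < β := div_pos htrmin (by positivity)
  have hbβ : ∀ t i, β ≤ bT V (s t) i := by
    intro t i
    have hΩ := covMat_posDef V (s t) hV (hpos t)
    have hub : ∀ x : Fin n → ℝ, x ⬝ᵥ covMat V (s t) *ᵥ x ≤ (R*W) * (x ⬝ᵥ x) := by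
      intro x
      rw [covMat_quad]
      have hE : ∀ i : Fin m, x ⬝ᵥ V i *ᵥ x ≤ (∑ j, ∑ k, |V i j k|) * (x ⬝ᵥ x) :=
        fun i => quad_le_entrysum (V i) x
      calc ∑ i, s t i * (x ⬝ᵥ V i *ᵥ x)
          ≤ ∑ i, R * ((∑ j, ∑ k, |V i j k|) * (x ⬝ᵥ x)) := by
            refine Finset.sum_le_sum fun i _ => ?_
            have hqnn : 0 ≤ x ⬝ᵥ V i *ᵥ x := by simpa using (hV i).posSemidef.dotProduct_mulVec_nonneg x
            calc s t i * (x ⬝ᵥ V i *ᵥ x) ≤ R * (x ⬝ᵥ V i *ᵥ x) :=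
                mul_le_mul_of_nonneg_right (hsR t i) hqnn
            _ ≤ R * ((∑ j, ∑ k, |V i j k|) * (x ⬝ᵥ x)) :=
                mul_le_mul_of_nonneg_left (hE i) hRpos.le
      _ = R * (∑ i, ∑ j, ∑ k, |V i j k|) * (x ⬝ᵥ x) := by
            rw [← Finset.mul_sum, ← Finset.sum_mul]
            ring
      _ ≤ (R*W) * (x ⬝ᵥ x) := by
            have : (∑ i : Fin m, ∑ j, ∑ k, |V i j k|) ≤ W := by rw [hWdef]; linarith
            have hx := dot_self_nonneg x
            nlinarith [mul_nonneg (mul_nonneg hRpos.le (sub_nonneg.mpr this)) hx]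
    have hinv := inv_quad_lower hΩ (by positivity : (0:ℝ) < R*W) hub
    have htr := trace_mul_ge hΩ.inv.isHermitian (hV i).posSemidef hinv
    have hbT : bT V (s t) i = ((covMat V (s t))⁻¹ * V i).trace := rfl
    have h9 : β ≤ (1/(R*W)) * (V i).trace := by
      rw [hβdef, div_eq_mul_one_div, mul_comm]
      exact mul_le_mul_of_nonneg_left
        (Finset.inf'_le _ (Finset.mem_univ i)) (by positivity)
    rw [hbT]
    exact le_trans h9 htr
  -- the gap inequality
  set g : ℕ → ℝ := fun t => ∑ i, (s (t+1) i - s t i) ^ 2 with hgdef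
  have hgnn : ∀ t, 0 ≤ g t := fun t => Finset.sum_nonneg fun i _ => sq_nonneg _
  have hgap : ∀ t, g t ≤ (R/β) * (f (t+1) - f t) := by
    intro t
    have key : ∀ i, (s (t+1) i - s t i) ^ 2
        ≤ (R/β) * (s t i * (Real.sqrt (aQ V y (s t) i) - Real.sqrt (bT V (s t) i)) ^ 2) := by
      intro i
      have ha := aQ_pos V y (s t) hV hy (hpos t) i
      have hb := bT_pos V (s t) hV (hpos t) i
      have hsqb : 0 < Real.sqrt (bT V (s t) i) := Real.sqrt_pos.mpr hb
      have heq : (s (t+1) i - s t i) ^ 2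
          = (s t i / bT V (s t) i) *
            (s t i * (Real.sqrt (aQ V y (s t) i) - Real.sqrt (bT V (s t) i)) ^ 2) := by
        rw [hrec t, mmMap_eq, Real.sqrt_div ha.le]
        exact diff_sq_helper (s t i) (Real.sqrt (aQ V y (s t) i))
          (Real.sqrt (bT V (s t) i)) (bT V (s t) i) hsqb.ne' (Real.sq_sqrt hb.le)
      rw [heq]
      have hfrac : s t i / bT V (s t) i ≤ R/β :=
        div_le_div₀ hRpos.le (hsR t i) hβpos (hbβ t i)
      exact mul_le_mul_of_nonneg_right hfrac
        (mul_nonneg (hpos t i).le (sq_nonneg _))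
    calc g t ≤ ∑ i, (R/β) * (s t i *
          (Real.sqrt (aQ V y (s t) i) - Real.sqrt (bT V (s t) i)) ^ 2) :=
        Finset.sum_le_sum fun i _ => key i
    _ = (R/β) * ∑ i, s t i *
          (Real.sqrt (aQ V y (s t) i) - Real.sqrt (bT V (s t) i)) ^ 2 := by
        rw [Finset.mul_sum]
    _ ≤ (R/β) * (f (t+1) - f t) := by
        refine mul_le_mul_of_nonneg_left ?_ (by positivity)
        linarith [hstep t]
  -- convergence
  have hBdd : BddAbove (Set.range f) := ⟨K, by rintro _ ⟨t, rfl⟩; exact hfK t⟩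
  have hft : Tendsto f atTop (nhds (⨆ t, f t)) := tendsto_atTop_ciSup hmono hBdd
  have hft1 : Tendsto (fun t => f (t+1)) atTop (nhds (⨆ t, f t)) :=
    hft.comp (tendsto_add_atTop_nat 1)
  have hd0 : Tendsto (fun t => f (t+1) - f t) atTop (nhds 0) := by
    simpa using hft1.sub hft
  have hg0 : Tendsto g atTop (nhds 0) := by
    have hC : Tendsto (fun t => (R/β) * (f (t+1) - f t)) atTop (nhds 0) := by
      simpa using hd0.const_mul (R/β)
    exact squeeze_zero hgnn hgap hC
  have hfin := (Real.continuous_sqrt.tendsto 0).comp hg0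
  simpa [Function.comp_def, Real.sqrt_zero, hgdef] using hfin
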